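/- Fix a ∈ ℝ, λ > 0, and p⁰, q₀ ∈ (0,1). Define f(q) = (1−q)·log((1−q)/(1−p⁰)) + q·log(q/p⁰) and l(q,q₀) = q·log(q/q₀) + (1−q)·log((1−q)/(1−q₀)). Then the function h(q) = a·q + f(q) + λ·l(q,q₀) on (0,1) is strictly convex and attains its unique minimum at the point q* = 1 / (1 + exp( (1/(1+λ)) · [ a + log((1−p⁰)/p⁰) + λ·log((1−q₀)/q₀) ] )). -/

import Mathlib

private lemma ent_hasDerivAt {c q : ℝ} (hc : c ≠ 0) (hq : q ≠ 0) :
    HasDerivAt (fun x => x * Real.log (x / c)) (Real.log (q / c) + 1) q := by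
  have hqc : q / c ≠ 0 := div_ne_zero hq hc
  have h1 : HasDerivAt (fun x : ℝ => x / c) (1 / c) q := by
    simpa using (hasDerivAt_id q).div_const c
  have h2 : HasDerivAt (fun x : ℝ => Real.log (x / c)) (1 / q) q := by
    have := (Real.hasDerivAt_log hqc).comp q h1
    refine this.congr_deriv ?_
    field_simp
  have := (hasDerivAt_id q).mul h2
  refine this.congr_deriv ?_
  field_simp
  simp only [id]; ring

/-- The one-dimensional proximal coordinate objective
`h(q) = a·q + f(q) + λ·l(q,q₀)`, where
`f(q) = (1−q)·log((1−q)/(1−p⁰)) + q·log(q/p⁰)` and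
`l(q,q₀) = q·log(q/q₀) + (1−q)·log((1−q)/(1−q₀))`, is strictly convex on
`(0,1)` and attains its unique minimum at
`q* = 1 / (1 + exp((1/(1+λ))·[a + log((1−p⁰)/p⁰) + λ·log((1−q₀)/q₀)]))`. -/
theorem proximal_update_closed_form
    (a lam p0 q0 : ℝ) (hlam : 0 < lam)
    (hp0 : p0 ∈ Set.Ioo (0 : ℝ) 1) (hq0 : q0 ∈ Set.Ioo (0 : ℝ) 1)
    (f l h : ℝ → ℝ)
    (hf : ∀ q : ℝ, f q =
      (1 - q) * Real.log ((1 - q) / (1 - p0)) + q * Real.log (q / p0))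
    (hl : ∀ q : ℝ, l q =
      q * Real.log (q / q0) + (1 - q) * Real.log ((1 - q) / (1 - q0)))
    (hh : ∀ q : ℝ, h q = a * q + f q + lam * l q)
    (qstar : ℝ)
    (hqstar : qstar = 1 / (1 + Real.exp ((1 / (1 + lam)) *
      (a + Real.log ((1 - p0) / p0) + lam * Real.log ((1 - q0) / q0))))) :
    StrictConvexOn ℝ (Set.Ioo (0 : ℝ) 1) h ∧
    qstar ∈ Set.Ioo (0 : ℝ) 1 ∧
    ∀ q ∈ Set.Ioo (0 : ℝ) 1, q ≠ qstar → h qstar < h q := by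
  obtain ⟨hp01, hp02⟩ := hp0
  obtain ⟨hq01, hq02⟩ := hq0
  have hp0ne : p0 ≠ 0 := ne_of_gt hp01
  have h1p0ne : (1 : ℝ) - p0 ≠ 0 := by linarith
  have hq0ne : q0 ≠ 0 := ne_of_gt hq01
  have h1q0ne : (1 : ℝ) - q0 ≠ 0 := by linarith
  set C : ℝ := a + Real.log ((1 - p0) / p0) + lam * Real.log ((1 - q0) / q0) with hC
  set D : ℝ → ℝ := fun q => C + (1 + lam) * (Real.log q - Real.log (1 - q)) with hD
  have hlam1 : (0 : ℝ) < 1 + lam := by linarith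
  -- derivative of h at each point of (0,1)
  have hderiv : ∀ q ∈ Set.Ioo (0 : ℝ) 1, HasDerivAt h (D q) q := by
    intro q hq
    obtain ⟨hq1, hq2⟩ := hq
    have hqne : q ≠ 0 := ne_of_gt hq1
    have h1qne : (1 : ℝ) - q ≠ 0 := by linarith
    have hmap : HasDerivAt (fun x : ℝ => 1 - x) (-1) q := by
      simpa using (hasDerivAt_id q).const_sub 1
    have T2 : HasDerivAt (fun x => x * Real.log (x / p0))
        (Real.log (q / p0) + 1) q := ent_hasDerivAt hp0ne hqne
    have T1 : HasDerivAt (fun x => (1 - x) * Real.log ((1 - x) / (1 - p0)))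
        (-(Real.log ((1 - q) / (1 - p0)) + 1)) q := by
      have := (ent_hasDerivAt h1p0ne h1qne).comp q hmap
      refine this.congr_deriv ?_
      ring
    have T3 : HasDerivAt (fun x => x * Real.log (x / q0))
        (Real.log (q / q0) + 1) q := ent_hasDerivAt hq0ne hqne
    have T4 : HasDerivAt (fun x => (1 - x) * Real.log ((1 - x) / (1 - q0)))
        (-(Real.log ((1 - q) / (1 - q0)) + 1)) q := by
      have := (ent_hasDerivAt h1q0ne h1qne).comp q hmap
      refine this.congr_deriv ?_
      ring
    have TL : HasDerivAt (fun x : ℝ => a * x) a q := by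
      simpa using (hasDerivAt_id q).const_mul a
    have hhe : h = fun x => a * x
        + ((1 - x) * Real.log ((1 - x) / (1 - p0)) + x * Real.log (x / p0))
        + lam * (x * Real.log (x / q0) + (1 - x) * Real.log ((1 - x) / (1 - q0))) := by
      funext x; rw [hh x, hf x, hl x]
    rw [hhe]
    have Hsum := (TL.add (T1.add T2)).add (((T3.add T4)).const_mul lam)
    refine Hsum.congr_deriv ?_
    rw [hD, hC]
    rw [Real.log_div hqne hp0ne, Real.log_div h1qne h1p0ne,
      Real.log_div hqne hq0ne, Real.log_div h1qne h1q0ne,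
      Real.log_div h1p0ne hp0ne, Real.log_div h1q0ne hq0ne]
    ring
  have hderiv' : ∀ q ∈ Set.Ioo (0 : ℝ) 1, deriv h q = D q := fun q hq =>
    (hderiv q hq).deriv
  have hcont : ContinuousOn h (Set.Ioo (0 : ℝ) 1) := fun q hq =>
    ((hderiv q hq).continuousAt).continuousWithinAt
  -- D is strictly monotone on (0,1)
  have hDmono : StrictMonoOn D (Set.Ioo (0 : ℝ) 1) := by
    intro x hx y hy hxy
    have l1 : Real.log x < Real.log y := Real.log_lt_log hx.1 hxy
    have l2 : Real.log (1 - y) < Real.log (1 - x) :=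
      Real.log_lt_log (by linarith [hy.2]) (by linarith)
    have : Real.log x - Real.log (1 - x) < Real.log y - Real.log (1 - y) := by
      linarith
    have := mul_lt_mul_of_pos_left this hlam1
    simp only [hD]
    linarith
  -- strict convexity
  have hconv : StrictConvexOn ℝ (Set.Ioo (0 : ℝ) 1) h := by
    apply StrictMonoOn.strictConvexOn_of_deriv (convex_Ioo 0 1) hcont
    rw [interior_Ioo]
    intro x hx y hy hxy
    rw [hderiv' x hx, hderiv' y hy]
    exact hDmono hx hy hxy
  -- qstar facts
  set t : ℝ := (1 / (1 + lam)) * C with ht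
  have hqs : qstar = 1 / (1 + Real.exp t) := hqstar
  have hE : (0 : ℝ) < Real.exp t := Real.exp_pos t
  have hEne : (1 : ℝ) + Real.exp t ≠ 0 := by positivity
  have hqs1 : 0 < qstar := by rw [hqs]; positivity
  have hqs2 : qstar < 1 := by
    rw [hqs]
    rw [div_lt_one (by positivity)]
    linarith
  have hqsmem : qstar ∈ Set.Ioo (0 : ℝ) 1 := ⟨hqs1, hqs2⟩
  -- D qstar = 0
  have h1qs : 1 - qstar = Real.exp t / (1 + Real.exp t) := by
    rw [hqs]; field_simp; ring
  have hlogdiff : Real.log qstar - Real.log (1 - qstar) = -t := by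
    rw [h1qs, hqs, Real.log_div one_ne_zero hEne,
      Real.log_div (ne_of_gt hE) hEne, Real.log_exp, Real.log_one]
    ring
  have hDqs : D qstar = 0 := by
    simp only [hD, hlogdiff, ht]
    field_simp
    ring
  refine ⟨hconv, hqsmem, ?_⟩
  intro q hq hne
  rcases lt_or_gt_of_ne hne with hlt | hgt
  · -- q < qstar : h strictly antitone on (0, qstar]
    have hanti : StrictAntiOn h (Set.Ioc (0 : ℝ) qstar) := by
      apply strictAntiOn_of_deriv_neg (convex_Ioc 0 qstar)
      · exact hcont.mono (fun x hx => ⟨hx.1, lt_of_le_of_lt hx.2 hqs2⟩)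
      · rw [interior_Ioc]
        intro x hx
        have hxm : x ∈ Set.Ioo (0 : ℝ) 1 := ⟨hx.1, hx.2.trans hqs2⟩
        rw [hderiv' x hxm]
        have := hDmono hxm hqsmem hx.2
        linarith [hDqs]
    have := hanti ⟨hq.1, hlt.le⟩ ⟨hqs1, le_refl _⟩ hlt
    exact this
  · -- qstar < q : h strictly monotone on [qstar, 1)
    have hmono : StrictMonoOn h (Set.Ico qstar 1) := by
      apply strictMonoOn_of_deriv_pos (convex_Ico qstar 1)
      · exact hcont.mono (fun x hx => ⟨lt_of_lt_of_le hqs1 hx.1, hx.2⟩)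
      · rw [interior_Ico]
        intro x hx
        have hxm : x ∈ Set.Ioo (0 : ℝ) 1 := ⟨hqs1.trans hx.1, hx.2⟩
        rw [hderiv' x hxm]
        have := hDmono hqsmem hxm hx.1
        linarith [hDqs]
    exact hmono ⟨le_refl _, hqs2⟩ ⟨hgt.le, hq.2⟩ hgt
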